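/- Define a_n = (2^n - 1)·|2^n - 1|_3 (a positive integer) and b_n = 2^n - 1. Then for every positive integer n, Σ_{d|n} μ(n/d)·a_d ≤ Σ_{d|n} μ(n/d)·b_d. -/

import Mathlib

private lemma sum_pow_two_Icc (k : ℕ) :
    ∑ d ∈ Finset.Icc 1 k, (2:ℚ)^d = 2^(k+1) - 2 := by
  induction k with
  | zero => simp
  | succ k ih =>
    rw [Finset.sum_Icc_succ_top (by omega), ih]
    ring

private lemma moeb_bounds (x : ℕ) :
    (-1:ℚ) ≤ (ArithmeticFunction.moebius x : ℚ) ∧ (ArithmeticFunction.moebius x : ℚ) ≤ 1 := by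
  by_cases h : Squarefree x
  · rw [ArithmeticFunction.moebius_apply_of_squarefree h]
    rcases Nat.even_or_odd (ArithmeticFunction.cardFactors x) with he | hoo
    · rw [he.neg_one_pow]; norm_num
    · rw [hoo.neg_one_pow]; norm_num
  · rw [ArithmeticFunction.moebius_eq_zero_of_not_squarefree h]; norm_num

theorem least_period_count_le (n : ℕ) (hn : 0 < n) :
    ∑ d ∈ n.divisors, (ArithmeticFunction.moebius (n / d) : ℚ) *
        (((2 : ℚ) ^ d - 1) * padicNorm 3 ((2 : ℚ) ^ d - 1)) ≤
    ∑ d ∈ n.divisors, (ArithmeticFunction.moebius (n / d) : ℚ) * ((2 : ℚ) ^ d - 1) := by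
  have hfact : Fact (Nat.Prime 3) := ⟨by norm_num⟩
  have hcast : ∀ d : ℕ, ((2^d - 1 : ℤ) : ℚ) = (2:ℚ)^d - 1 := by intro d; push_cast; ring
  rcases Nat.even_or_odd n with he | ho
  · -- even case
    obtain ⟨k, hk⟩ := he
    have hk1 : 1 ≤ k := by omega
    rw [← sub_nonneg, ← Finset.sum_sub_distrib]
    have hterm : ∀ d ∈ n.divisors,
        (ArithmeticFunction.moebius (n / d) : ℚ) * ((2:ℚ)^d - 1) -
          (ArithmeticFunction.moebius (n / d) : ℚ) *
            (((2:ℚ)^d - 1) * padicNorm 3 ((2:ℚ)^d - 1)) =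
        (ArithmeticFunction.moebius (n / d) : ℚ) *
          (((2:ℚ)^d - 1) * (1 - padicNorm 3 ((2:ℚ)^d - 1))) := by
      intro d _; ring
    rw [Finset.sum_congr rfl hterm]
    set g : ℕ → ℚ := fun d => (ArithmeticFunction.moebius (n / d) : ℚ) *
      (((2:ℚ)^d - 1) * (1 - padicNorm 3 ((2:ℚ)^d - 1))) with hg
    rw [← Finset.add_sum_erase _ g (Nat.mem_divisors_self n hn.ne')]
    -- bound for the main term
    have hdvd3 : ((3:ℤ)) ∣ (2^n - 1 : ℤ) := by
      have h41 : (4 - 1 : ℤ) ∣ (4^k - 1^k : ℤ) := sub_dvd_pow_sub_pow 4 1 k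
      have h4 : (4:ℤ)^k = 2^n := by
        rw [show (4:ℤ) = 2^2 by norm_num, ← pow_mul, hk]
        ring_nf
      rw [h4, one_pow] at h41
      simpa using h41
    have hNn : padicNorm 3 ((2:ℚ)^n - 1) ≤ 1/3 := by
      have := (padicNorm.dvd_iff_norm_le (p := 3) (n := 1) (z := 2^n - 1)).1 (by simpa using hdvd3)
      rw [hcast n] at this
      simpa using this
    have hcn : (0:ℚ) ≤ (2:ℚ)^n - 1 := by
      have : (1:ℚ) ≤ 2^n := one_le_pow₀ (by norm_num)
      linarith
    have hmain : (2/3) * ((2:ℚ)^n - 1) ≤ g n := by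
      have h1 : n / n = 1 := Nat.div_self hn
      rw [hg]
      simp only [h1, ArithmeticFunction.moebius_apply_one]
      push_cast
      nlinarith [padicNorm.nonneg (p := 3) ((2:ℚ)^n - 1)]
    -- bound for the remaining terms
    have hrest : -(2^(k+1) - 2 - (k:ℚ)) ≤ ∑ d ∈ n.divisors.erase n, g d := by
      have hsub : n.divisors.erase n ⊆ Finset.Icc 1 k := by
        intro d hd
        rw [Finset.mem_erase, Nat.mem_divisors] at hd
        obtain ⟨hne, hdvd, -⟩ := hd
        have hdpos : 0 < d := Nat.pos_of_dvd_of_pos hdvd hn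
        obtain ⟨q, hq⟩ := hdvd
        have hq2 : 2 ≤ q := by
          rcases Nat.lt_or_ge q 2 with h | h
          · interval_cases q <;> omega
          · exact h
        have h2d : 2 * d ≤ n := by
          calc 2 * d ≤ q * d := Nat.mul_le_mul_right d hq2
               _ = d * q := Nat.mul_comm q d
               _ = n := hq.symm
        rw [Finset.mem_Icc]; omega
      have h1 : ∑ d ∈ n.divisors.erase n, -((2:ℚ)^d - 1) ≤ ∑ d ∈ n.divisors.erase n, g d := by
        apply Finset.sum_le_sum
        intro d hd
        have hc : (0:ℚ) ≤ (2:ℚ)^d - 1 := by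
          have : (1:ℚ) ≤ 2^d := one_le_pow₀ (by norm_num)
          linarith
        have hN0 : (0:ℚ) ≤ padicNorm 3 ((2:ℚ)^d - 1) := padicNorm.nonneg _
        have hN1 : padicNorm 3 ((2:ℚ)^d - 1) ≤ 1 := by
          have := padicNorm.of_int (p := 3) (2^d - 1 : ℤ)
          rwa [hcast d] at this
        obtain ⟨hm1, hm2⟩ := moeb_bounds (n / d)
        have hP0 : (0:ℚ) ≤ ((2:ℚ)^d - 1) * (1 - padicNorm 3 ((2:ℚ)^d - 1)) :=
          mul_nonneg hc (by linarith)
        have hPc : ((2:ℚ)^d - 1) * (1 - padicNorm 3 ((2:ℚ)^d - 1)) ≤ (2:ℚ)^d - 1 := by nlinarith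
        have hmul := mul_le_mul_of_nonneg_right hm1 hP0
        simp only [hg]
        linarith
      have h2 : ∑ d ∈ n.divisors.erase n, ((2:ℚ)^d - 1) ≤ ∑ d ∈ Finset.Icc 1 k, ((2:ℚ)^d - 1) := by
        apply Finset.sum_le_sum_of_subset_of_nonneg hsub
        intro d _ _
        have : (1:ℚ) ≤ 2^d := one_le_pow₀ (by norm_num)
        linarith
      have h3 : ∑ d ∈ Finset.Icc 1 k, ((2:ℚ)^d - 1) = 2^(k+1) - 2 - k := by
        rw [Finset.sum_sub_distrib, sum_pow_two_Icc, Finset.sum_const, Nat.card_Icc]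
        simp
      rw [Finset.sum_neg_distrib] at h1
      linarith
    have hpow : (2:ℚ)^n = 2^k * 2^k := by rw [hk, pow_add]
    have hk2 : (2:ℚ)^k ≥ 2 := by
      calc (2:ℚ)^k ≥ 2^1 := by
              apply pow_le_pow_right₀ (by norm_num) hk1
           _ = 2 := by norm_num
    have hkQ : (1:ℚ) ≤ (k:ℚ) := by exact_mod_cast hk1
    have hks : (2:ℚ)^(k+1) = 2 * 2^k := by rw [pow_succ]; ring
    nlinarith [sq_nonneg (2 * (2:ℚ)^k - 3)]
  · -- odd case
    apply le_of_eq
    refine Finset.sum_congr rfl fun d hd => ?_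
    have hdvd : d ∣ n := (Nat.mem_divisors.1 hd).1
    have hdodd : Odd d := by
      rcases Nat.even_or_odd d with h | h
      · exfalso
        obtain ⟨m, hm⟩ : 2 ∣ n := dvd_trans h.two_dvd hdvd
        exact (Nat.not_even_iff_odd.2 ho) ⟨m, by omega⟩
      · exact h
    obtain ⟨j, hj⟩ := hdodd
    have hnot : ¬ (3:ℤ) ∣ (2^d - 1 : ℤ) := by
      intro h
      have h0 : ((2^d - 1 : ℤ) : ZMod 3) = 0 := by
        exact_mod_cast (ZMod.intCast_zmod_eq_zero_iff_dvd _ 3).2 h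
      push_cast at h0
      rw [hj, pow_add, pow_mul] at h0
      have h4 : ((2:ZMod 3))^2 = 1 := rfl
      rw [h4, one_pow] at h0
      have h5 : (1 * (2:ZMod 3) ^ 1 - 1 : ZMod 3) = 1 := rfl
      rw [h5] at h0
      exact one_ne_zero h0
    have hN : padicNorm 3 ((2:ℚ)^d - 1) = 1 := by
      have := (padicNorm.int_eq_one_iff (p := 3) (2^d - 1 : ℤ)).2 (by simpa using hnot)
      rwa [hcast d] at this
    rw [hN, mul_one]
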